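/- Let 0<r<1 and suppose 0 ≤ x ≤ z ≤ 2^{-r}. Then for every real y with y > z^{1/r}, one has (y - x^{1/r})^r - (y - z^{1/r})^r ≤ 2^{r-1} (y - z^{1/r})^{r-1} (z-x). -/

import Mathlib

open Real

-- Bernoulli consequence: for 0 < u ≤ v, 0 ≤ r ≤ 1: v^r ≤ u^r + r * u^(r-1) * (v-u)
lemma aux_upper {r u v : ℝ} (hu : 0 < u) (huv : u ≤ v) (hr0 : 0 ≤ r) (hr1 : r ≤ 1) :
    v ^ r ≤ u ^ r + r * u ^ (r - 1) * (v - u) := by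
  have hs : (-1 : ℝ) ≤ (v - u) / u := by
    have : 0 ≤ (v - u) / u := div_nonneg (by linarith) hu.le
    linarith
  have h := rpow_one_add_le_one_add_mul_self hs hr0 hr1
  have h1 : (1 + (v - u) / u) = v / u := by field_simp; ring
  rw [h1, div_rpow (by linarith) hu.le] at h
  have hur : 0 < u ^ r := rpow_pos_of_pos hu r
  have h2 : v ^ r ≤ u ^ r * (1 + r * ((v - u) / u)) := by
    rw [← div_le_iff₀' hur]; exact h
  have h3 : u ^ (r - 1) = u ^ r / u := by
    rw [rpow_sub hu, rpow_one]
  rw [h3]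
  calc v ^ r ≤ u ^ r * (1 + r * ((v - u) / u)) := h2
    _ = u ^ r + r * (u ^ r / u) * (v - u) := by field_simp

-- lower bound: for 0 ≤ a ≤ b, 0 < r ≤ 1: r * b^(r-1) * (b-a) ≤ b^r - a^r
lemma aux_lower {r a b : ℝ} (ha : 0 ≤ a) (hab : a ≤ b) (hr0 : 0 < r) (hr1 : r ≤ 1)
    (hb : 0 < b) : r * b ^ (r - 1) * (b - a) ≤ b ^ r - a ^ r := by
  have hs : (-1 : ℝ) ≤ a / b - 1 := by
    have : 0 ≤ a / b := div_nonneg ha hb.le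
    linarith
  have h := rpow_one_add_le_one_add_mul_self hs hr0.le hr1
  rw [add_sub_cancel] at h
  have hbr : 0 < b ^ r := rpow_pos_of_pos hb r
  have h2 : a ^ r ≤ b ^ r * (1 + r * (a / b - 1)) := by
    have hm := mul_le_mul_of_nonneg_left h hbr.le
    have : b ^ r * (a / b) ^ r = a ^ r := by
      rw [← mul_rpow hb.le (div_nonneg ha hb.le), mul_div_cancel₀ a hb.ne']
    rwa [this] at hm
  have h3 : b ^ (r - 1) = b ^ r / b := by rw [rpow_sub hb, rpow_one]
  have h4 : b ^ r * (1 + r * (a / b - 1)) = b ^ r - r * (b ^ r / b) * (b - a) := by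
    field_simp; ring
  rw [h3]
  linarith [h4 ▸ h2]

theorem stmt4 (r x z y : ℝ) (hr0 : 0 < r) (hr1 : r < 1)
    (hx : 0 ≤ x) (hxz : x ≤ z) (hz : z ≤ (2 : ℝ) ^ (-r))
    (hy : z ^ (1 / r) < y) :
    (y - x ^ (1 / r)) ^ r - (y - z ^ (1 / r)) ^ r ≤
      2 ^ (r - 1) * (y - z ^ (1 / r)) ^ (r - 1) * (z - x) := by
  set a := x ^ (1 / r) with ha_def
  set b := z ^ (1 / r) with hb_def
  have hz0 : 0 ≤ z := hx.trans hxz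
  have ha0 : 0 ≤ a := rpow_nonneg hx _
  have hb0 : 0 ≤ b := rpow_nonneg hz0 _
  have hab : a ≤ b := rpow_le_rpow hx hxz (by positivity)
  have har : a ^ r = x := by
    rw [ha_def, ← rpow_mul hx, one_div_mul_cancel hr0.ne', rpow_one]
  have hbr : b ^ r = z := by
    rw [hb_def, ← rpow_mul hz0, one_div_mul_cancel hr0.ne', rpow_one]
  have hu : 0 < y - b := by linarith
  have huv : y - b ≤ y - a := by linarith
  -- half bound: b ≤ 1/2
  have hbhalf : b ≤ 1 / 2 := by
    have h1 : b ≤ ((2 : ℝ) ^ (-r)) ^ (1 / r) :=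
      rpow_le_rpow hz0 hz (by positivity)
    have h2 : ((2 : ℝ) ^ (-r)) ^ (1 / r) = 1 / 2 := by
      rw [← rpow_mul (by norm_num : (0:ℝ) ≤ 2)]
      rw [neg_mul, mul_one_div_cancel hr0.ne', rpow_neg_one]
      norm_num
    linarith [h2 ▸ h1]
  have step1 : (y - a) ^ r - (y - b) ^ r ≤ r * (y - b) ^ (r - 1) * (b - a) := by
    have := aux_upper hu huv hr0.le hr1.le
    have he : (y - a) - (y - b) = b - a := by ring
    linarith [he ▸ this]
  -- step2 : r * (b - a) ≤ 2 ^ (r - 1) * (z - x)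
  have step2 : r * (b - a) ≤ 2 ^ (r - 1) * (z - x) := by
    rcases eq_or_lt_of_le hb0 with hb | hb
    · have ha' : a = 0 := le_antisymm (hab.trans hb.symm.le) ha0
      have hx' : x = z := by
        rw [← har, ← hbr, ha', ← hb]
      rw [← hb, ha', hx']
      simp
    · have hlow := aux_lower ha0 hab hr0 hr1.le hb
      rw [har, hbr] at hlow
      -- r * (b - a) = b^(1-r) * (r * b^(r-1) * (b-a))
      have hbb : b ^ (1 - r) * b ^ (r - 1) = 1 := by
        rw [← rpow_add hb]; norm_num
      have key : r * (b - a) = b ^ (1 - r) * (r * b ^ (r - 1) * (b - a)) := by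
        rw [show b ^ (1 - r) * (r * b ^ (r - 1) * (b - a)) =
              (b ^ (1 - r) * b ^ (r - 1)) * (r * (b - a)) by ring, hbb, one_mul]
      have hmono : b ^ (1 - r) ≤ (1 / 2 : ℝ) ^ (1 - r) :=
        rpow_le_rpow hb0 hbhalf (by linarith)
      have hhalf : ((1 / 2 : ℝ)) ^ (1 - r) = 2 ^ (r - 1) := by
        rw [one_div, ← rpow_neg_one (2 : ℝ), ← rpow_mul (by norm_num : (0:ℝ) ≤ 2)]
        ring_nf
      have h5 : b ^ (1 - r) * (r * b ^ (r - 1) * (b - a)) ≤ b ^ (1 - r) * (z - x) :=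
        mul_le_mul_of_nonneg_left hlow (rpow_nonneg hb0 _)
      have h6 : b ^ (1 - r) * (z - x) ≤ 2 ^ (r - 1) * (z - x) := by
        rw [← hhalf]
        exact mul_le_mul_of_nonneg_right hmono (by linarith)
      linarith [key ▸ (h5.trans h6)]
  calc (y - a) ^ r - (y - b) ^ r ≤ r * (y - b) ^ (r - 1) * (b - a) := step1
    _ = (y - b) ^ (r - 1) * (r * (b - a)) := by ring
    _ ≤ (y - b) ^ (r - 1) * (2 ^ (r - 1) * (z - x)) :=
        mul_le_mul_of_nonneg_left step2 (rpow_nonneg hu.le _)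
    _ = 2 ^ (r - 1) * (y - b) ^ (r - 1) * (z - x) := by ring
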